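/- The function g₂(p) = e^{-(p − 1/2 + (1/2)√(4p−3))} (p − 1/2 + (1/2)√(4p−3))^{p−1/2} / Γ(p) is decreasing in p on [1,∞). -/

import Mathlib

open Real Set Filter Topology

lemma expQuad {w : ℝ} (hw : 0 ≤ w) : Real.exp (-w) ≤ 1 - w + w ^ 2 / 2 := by
  have key : MonotoneOn (fun w : ℝ => 1 - w + w ^ 2 / 2 - Real.exp (-w)) (Set.Ici 0) := by
    apply monotoneOn_of_deriv_nonneg (convex_Ici 0)
    · fun_prop
    · intro x _
      apply DifferentiableAt.differentiableWithinAt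
      fun_prop
    · intro x hx
      rw [interior_Ici] at hx
      have h1 : HasDerivAt (fun w : ℝ => 1 - w + w ^ 2 / 2 - Real.exp (-w))
          (-1 + x + Real.exp (-x)) x := by
        have h2 : HasDerivAt (fun w : ℝ => -w) (-1) x := (hasDerivAt_id x).neg
        have h3 := h2.exp
        have h4 : HasDerivAt (fun w : ℝ => 1 - w + w ^ 2 / 2) (-1 + x) x := by
          have := ((hasDerivAt_pow 2 x).div_const 2)
          have h5 : HasDerivAt (fun w : ℝ => 1 - w) (-1) x := by
            simpa using (hasDerivAt_id x).const_sub 1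
          exact (h5.add this).congr_deriv (by norm_num)
        exact (h4.sub h3).congr_deriv (by ring)
      rw [h1.deriv]
      have := Real.add_one_le_exp (-x)
      linarith
  have := key (Set.mem_Ici.mpr le_rfl) (Set.mem_Ici.mpr hw) hw
  norm_num at this
  linarith

lemma expPade {u : ℝ} (hu : 0 ≤ u) : (2 - u) * Real.exp u ≤ 2 + u := by
  have key : MonotoneOn (fun u : ℝ => 2 + u - (2 - u) * Real.exp u) (Set.Ici 0) := by
    apply monotoneOn_of_deriv_nonneg (convex_Ici 0)
    · fun_prop
    · intro x _
      apply DifferentiableAt.differentiableWithinAt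
      fun_prop
    · intro x hx
      rw [interior_Ici] at hx
      have h1 : HasDerivAt (fun u : ℝ => 2 + u - (2 - u) * Real.exp u)
          (1 - (1 - x) * Real.exp x) x := by
        have h2 : HasDerivAt (fun u : ℝ => 2 - u) (-1) x := (hasDerivAt_id x).const_sub 2
        have h3 := h2.mul (Real.hasDerivAt_exp x)
        have h4 : HasDerivAt (fun u : ℝ => 2 + u) 1 x := by
          simpa using (hasDerivAt_id x).const_add 2
        exact (h4.sub h3).congr_deriv (by ring)
      rw [h1.deriv]
      have h6 : (1 - x) * Real.exp x ≤ 1 := by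
        have h7 := Real.add_one_le_exp (-x)
        have h8 : (1 - x) * Real.exp x ≤ Real.exp (-x) * Real.exp x :=
          mul_le_mul_of_nonneg_right (by linarith) (Real.exp_pos x).le
        rw [← Real.exp_add, neg_add_cancel, Real.exp_zero] at h8
        exact h8
      linarith
  have := key (Set.mem_Ici.mpr le_rfl) (Set.mem_Ici.mpr hu) hu
  norm_num at this
  linarith


lemma one_div_le_log {t : ℝ} (ht : 1 ≤ t) :
    1 / t ≤ Real.log (t + 1/2) - Real.log (t - 1/2) := by
  have ht0 : 0 < t := by linarith
  have h2 := expPade (u := 1/t) (by positivity)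
  have hE := Real.exp_pos (1/t)
  have h3 : Real.exp (1/t) * (t - 1/2) ≤ t + 1/2 := by
    have h4 := mul_le_mul_of_nonneg_right h2 ht0.le
    have h5 : (1/t) * t = 1 := by field_simp
    nlinarith [h4, h5]
  have h6 : Real.exp (1/t) ≤ (t + 1/2) / (t - 1/2) := by
    rw [le_div_iff₀ (by linarith)]; exact h3
  have h7 := Real.log_le_log hE h6
  rwa [Real.log_exp, Real.log_div (by positivity) (by intro h; nlinarith)] at h7

lemma f_diff {x : ℝ} (hx : 0 < x) : DifferentiableAt ℝ (Real.log ∘ Real.Gamma) x := by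
  refine (Real.differentiableAt_Gamma ?_).log (Real.Gamma_ne_zero ?_) <;>
    exact fun m => ne_of_gt (by have := Nat.cast_nonneg (α := ℝ) m; linarith)

lemma f_rec {x : ℝ} (hx : 0 < x) :
    (Real.log ∘ Real.Gamma) (x + 1) = (Real.log ∘ Real.Gamma) x + Real.log x := by
  simp only [Function.comp_apply, Real.Gamma_add_one hx.ne',
    Real.log_mul hx.ne' (Real.Gamma_pos_of_pos hx).ne', add_comm]

lemma f_deriv_rec {x : ℝ} (hx : 0 < x) :
    deriv (Real.log ∘ Real.Gamma) (x + 1) = deriv (Real.log ∘ Real.Gamma) x + 1 / x := by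
  rw [← deriv_comp_add_const, one_div, ← Real.deriv_log,
    ← deriv_add (f_diff hx) (Real.differentiableAt_log hx.ne')]
  apply Filter.EventuallyEq.deriv_eq
  filter_upwards [eventually_gt_nhds hx] using fun y hy => f_rec hy

lemma f_deriv_nat {x : ℝ} (hx : 0 < x) (n : ℕ) :
    deriv (Real.log ∘ Real.Gamma) (x + n) =
      deriv (Real.log ∘ Real.Gamma) x + ∑ k ∈ Finset.range n, 1 / (x + k) := by
  induction n with
  | zero => simp
  | succ n ih =>
    have h1 : x + (n + 1 : ℕ) = (x + n) + 1 := by push_cast; ring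
    rw [h1, f_deriv_rec (by positivity), ih, Finset.sum_range_succ, add_assoc]

lemma f_derivLB {y : ℝ} (hy : 1 < y) :
    Real.log (y - 1) ≤ deriv (Real.log ∘ Real.Gamma) y := by
  have h0 : (0:ℝ) < y - 1 := by linarith
  refine (le_of_eq ?_).trans <| Real.convexOn_log_Gamma.slope_le_deriv
    (mem_Ioi.mpr h0) (mem_Ioi.mpr (by linarith)) (by linarith) (f_diff (by linarith))
  rw [slope_def_field, show y - (y - 1) = (1:ℝ) by ring, div_one,
    show y = (y - 1) + 1 by ring, f_rec h0]
  ring_nf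

lemma sum_UB {p : ℝ} (hp : 1 ≤ p) (n : ℕ) :
    ∑ k ∈ Finset.range n, 1 / (p + k) ≤ Real.log (p + n - 1/2) - Real.log (p - 1/2) := by
  have key : ∀ k ∈ Finset.range n, 1 / (p + k) ≤
      Real.log (p + (k+1 : ℕ) - 1/2) - Real.log (p + k - 1/2) := by
    intro k _
    have h1 : (1:ℝ) ≤ p + k := by have := Nat.cast_nonneg (α := ℝ) k; linarith
    have := one_div_le_log h1
    have e1 : p + (k+1 : ℕ) - 1/2 = (p + k) + 1/2 := by push_cast; ring
    have e2 : p + k - 1/2 = (p + k) - 1/2 := by ring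
    rw [e1, e2]; linarith
  calc ∑ k ∈ Finset.range n, 1 / (p + k)
      ≤ ∑ k ∈ Finset.range n,
        (Real.log (p + (k+1 : ℕ) - 1/2) - Real.log (p + k - 1/2)) := Finset.sum_le_sum key
    _ = Real.log (p + (n:ℕ) - 1/2) - Real.log (p + ((0:ℕ):ℝ) - 1/2) :=
        Finset.sum_range_sub (fun k : ℕ => Real.log (p + k - 1/2)) n
    _ = Real.log (p + n - 1/2) - Real.log (p - 1/2) := by norm_num

lemma psi_ge {p : ℝ} (hp : 1 < p) :
    Real.log (p - 1/2) ≤ deriv (Real.log ∘ Real.Gamma) p := by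
  have hp0 : (0:ℝ) < p := by linarith
  set D := deriv (Real.log ∘ Real.Gamma) p with hD
  have hle : ∀ n : ℕ, Real.log (p - 1/2) ≤ D + (Real.log (p + n - 1/2) - Real.log (p + n - 1)) := by
    intro n
    have hn1 : (1:ℝ) < p + n := by have := Nat.cast_nonneg (α := ℝ) n; linarith
    have h1 := f_derivLB hn1
    rw [f_deriv_nat hp0 n] at h1
    have h2 := sum_UB hp.le n
    have : p + n - 1 = p + n - 1 := rfl
    linarith
  have htend : Tendsto (fun n : ℕ => D + (Real.log (p + n - 1/2) - Real.log (p + n - 1)))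
      atTop (𝓝 (D + 0)) := by
    apply Tendsto.const_add
    have hpos : ∀ n : ℕ, (0:ℝ) < p + n - 1 := by
      intro n; have := Nat.cast_nonneg (α := ℝ) n; linarith
    have hd : Tendsto (fun n : ℕ => p + n - 1) atTop atTop := by
      have h1 : Tendsto (fun n : ℕ => (n:ℝ)) atTop atTop := tendsto_natCast_atTop_atTop
      have := tendsto_atTop_add_const_right atTop (p - 1) h1
      convert this using 2 with n
      ring
    have h3 : Tendsto (fun n : ℕ => 1 + (1/2) / (p + n - 1)) atTop (𝓝 1) := by
      have := (tendsto_const_nhds (x := (1/2:ℝ)) (f := atTop)).div_atTop hd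
      simpa using (tendsto_const_nhds (x := (1:ℝ)) (f := atTop)).add this
    have h4 : Tendsto (fun n : ℕ => (p + n - 1/2) / (p + n - 1)) atTop (𝓝 1) := by
      apply h3.congr
      intro n
      have hd0 : p + (n:ℝ) - 1 ≠ 0 := (hpos n).ne'
      rw [show p + (n:ℝ) - 1/2 = (p + (n:ℝ) - 1) + 1/2 by ring, add_div, div_self hd0]
    have h5 := (Real.continuousAt_log (by norm_num : (1:ℝ) ≠ 0)).tendsto.comp h4
    rw [Real.log_one] at h5
    apply h5.congr
    intro n
    simp only [Function.comp_apply]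
    rw [Real.log_div (by have := hpos n; intro h; nlinarith) (hpos n).ne']
  have := ge_of_tendsto htend (Filter.Eventually.of_forall hle)
  simpa using this


noncomputable def Gfun (p : ℝ) : ℝ := (p - 1/2) * Real.log (p - 1/2) - (p - 1/2)
noncomputable def mfun (p : ℝ) : ℝ := p - 1/2 + Real.sqrt (4*p - 3)/2
noncomputable def Afun (p : ℝ) : ℝ := (p - 1/2) * Real.log (mfun p) - mfun p

lemma hasDerivAt_Gfun {p : ℝ} (hp : 1 ≤ p) : HasDerivAt Gfun (Real.log (p - 1/2)) p := by
  have hp2 : (0:ℝ) < p - 1/2 := by linarith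
  have hu : HasDerivAt (fun p : ℝ => p - 1/2) 1 p := (hasDerivAt_id p).sub_const (1/2)
  have hlog : HasDerivAt (fun p : ℝ => Real.log (p - 1/2)) (1/(p - 1/2)) p := by
    have := (Real.hasDerivAt_log hp2.ne').comp p hu
    exact this.congr_deriv (by ring)
  have hmul := hu.mul hlog
  have := hmul.sub hu
  refine this.congr_deriv ?_
  rw [mul_one_div, div_self (by linarith : p - 1/2 ≠ 0)]
  ring

lemma mfun_pos {p : ℝ} (hp : 1 ≤ p) : 0 < mfun p := by
  have := Real.sqrt_nonneg (4*p - 3)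
  unfold mfun; linarith

lemma step2 : MonotoneOn (fun p => (Real.log ∘ Real.Gamma) p - Gfun p) (Set.Ici 1) := by
  apply monotoneOn_of_deriv_nonneg (convex_Ici 1)
  · apply ContinuousOn.sub
    · intro p hp
      exact (f_diff (by simp at hp; linarith)).continuousAt.continuousWithinAt
    · intro p hp
      simp only [Set.mem_Ici] at hp
      exact (hasDerivAt_Gfun hp).differentiableAt.continuousAt.continuousWithinAt
  · rw [interior_Ici]
    intro p hp
    simp only [Set.mem_Ioi] at hp
    exact ((f_diff (by linarith)).sub (hasDerivAt_Gfun hp.le).differentiableAt).differentiableWithinAt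
  · rw [interior_Ici]
    intro p hp
    simp only [Set.mem_Ioi] at hp
    have hd : deriv (fun p => (Real.log ∘ Real.Gamma) p - Gfun p) p =
        deriv (Real.log ∘ Real.Gamma) p - Real.log (p - 1/2) := by
      exact (((f_diff (by linarith)).hasDerivAt).sub (hasDerivAt_Gfun hp.le)).deriv
    rw [hd, sub_nonneg]
    exact psi_ge hp

lemma key_log_ineq {s : ℝ} (hs : 1 ≤ s) :
    Real.log ((s+1)^2/4) ≤ 2/(s+1) + Real.log ((s^2+1)/4) := by
  have hs1 : (0:ℝ) < s + 1 := by linarith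
  set w := 2/(s+1) with hw
  have hw0 : 0 ≤ w := by positivity
  have h1 := expQuad hw0
  have h2 : 1 - w + w^2/2 = (s^2+1)/(s+1)^2 := by
    rw [hw]; field_simp; ring
  have h3 : (s+1)^2/4 * Real.exp (-w) ≤ (s^2+1)/4 := by
    have h1' : Real.exp (-w) ≤ (s^2+1)/(s+1)^2 := h2 ▸ h1
    calc (s+1)^2/4 * Real.exp (-w) ≤ (s+1)^2/4 * ((s^2+1)/(s+1)^2) :=
          mul_le_mul_of_nonneg_left h1' (by positivity)
      _ = (s^2+1)/4 := by field_simp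
  have h4 : (s+1)^2/4 ≤ Real.exp w * ((s^2+1)/4) := by
    have h := mul_le_mul_of_nonneg_left h3 (Real.exp_pos w).le
    have hx : Real.exp w * ((s+1)^2/4 * Real.exp (-w)) = (s+1)^2/4 := by
      rw [mul_comm (Real.exp w), mul_assoc, ← Real.exp_add, neg_add_cancel, Real.exp_zero, mul_one]
    rwa [hx] at h
  have h5 := Real.log_le_log (by positivity) h4
  rwa [Real.log_mul (Real.exp_pos w).ne' (by positivity), Real.log_exp] at h5

lemma sqrt_gt_one {p : ℝ} (hp : 1 < p) : 1 < Real.sqrt (4*p - 3) := by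
  rw [show (1:ℝ) = Real.sqrt 1 from Real.sqrt_one.symm]
  exact Real.sqrt_lt_sqrt (by norm_num) (by linarith)

lemma hasDerivAt_Afun {p : ℝ} (hp : 1 < p) :
    HasDerivAt Afun
      (1 * Real.log (mfun p) + (p - 1/2) * ((mfun p)⁻¹ * (1 + 1/Real.sqrt (4*p - 3)))
        - (1 + 1/Real.sqrt (4*p - 3))) p := by
  set s := Real.sqrt (4*p - 3) with hsdef
  have hs1 : 1 < s := sqrt_gt_one hp
  have hs0 : s ≠ 0 := by linarith
  have hin : HasDerivAt (fun p : ℝ => 4*p - 3) 4 p := by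
    simpa using (((hasDerivAt_id p).const_mul (4:ℝ)).sub_const 3)
  have hsqrt : HasDerivAt (fun p : ℝ => Real.sqrt (4*p - 3)) (2/s) p := by
    have h := (Real.hasDerivAt_sqrt (show 4*p - 3 ≠ 0 by nlinarith)).comp p hin
    refine h.congr_deriv ?_
    rw [← hsdef]
    field_simp
    ring
  have hm : HasDerivAt mfun (1 + 1/s) p := by
    unfold mfun
    have := ((hasDerivAt_id p).sub_const (1/2:ℝ)).add (hsqrt.div_const 2)
    refine this.congr_deriv ?_
    ring
  have hmne : mfun p ≠ 0 := (mfun_pos hp.le).ne'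
  have hlogm : HasDerivAt (fun p => Real.log (mfun p)) ((mfun p)⁻¹ * (1 + 1/s)) p :=
    (Real.hasDerivAt_log hmne).comp p hm
  have hu : HasDerivAt (fun p : ℝ => p - 1/2) 1 p := (hasDerivAt_id p).sub_const _
  have hfin := (hu.mul hlogm).sub hm
  unfold Afun
  exact hfin

lemma step1 : AntitoneOn (fun p => Afun p - Gfun p) (Set.Ici 1) := by
  have hmc : Continuous mfun := by unfold mfun; fun_prop
  apply antitoneOn_of_deriv_nonpos (convex_Ici 1)
  · apply ContinuousOn.sub
    · apply ContinuousOn.sub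
      · apply ContinuousOn.mul (by fun_prop)
        exact (Real.continuousOn_log.comp hmc.continuousOn
          (fun p hp => (mfun_pos hp).ne'))
      · exact hmc.continuousOn
    · intro p hp
      exact (hasDerivAt_Gfun hp).differentiableAt.continuousAt.continuousWithinAt
  · rw [interior_Ici]
    intro p hp
    simp only [Set.mem_Ioi] at hp
    exact ((hasDerivAt_Afun hp).sub (hasDerivAt_Gfun hp.le)).differentiableAt.differentiableWithinAt
  · rw [interior_Ici]
    intro p hp
    simp only [Set.mem_Ioi] at hp
    rw [show deriv (fun p => Afun p - Gfun p) p = _ from ((hasDerivAt_Afun hp).sub (hasDerivAt_Gfun hp.le)).deriv]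
    set s := Real.sqrt (4*p - 3) with hsdef
    have hs1 : 1 < s := sqrt_gt_one hp
    have hs0 : s ≠ 0 := by linarith
    have hs2 : s^2 = 4*p - 3 := Real.sq_sqrt (by linarith)
    have hmeq : mfun p = (s+1)^2/4 := by
      unfold mfun; rw [← hsdef]; linear_combination -hs2/4
    have hpeq : p - 1/2 = (s^2+1)/4 := by linear_combination -hs2/4
    have hmne : mfun p ≠ 0 := (mfun_pos hp.le).ne'
    have hrat : (p - 1/2) * ((mfun p)⁻¹ * (1 + 1/s)) - (1 + 1/s) = -(2/(s+1)) := by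
      rw [hmeq, hpeq]
      have : s + 1 ≠ 0 := by linarith
      field_simp
      ring
    have hkey := key_log_ineq hs1.le
    have hlm : Real.log (mfun p) = Real.log ((s+1)^2/4) := by rw [hmeq]
    have hlp : Real.log (p - 1/2) = Real.log ((s^2+1)/4) := by rw [hpeq]
    linarith [hkey, hrat, hlm, hlp]

/-- `g₂(p) = e^{-(p-1/2+√(4p-3)/2)} (p-1/2+√(4p-3)/2)^{p-1/2} / Γ(p)` is decreasing on `[1,∞)`. -/
theorem stmt8 :
    AntitoneOn
      (fun p : ℝ =>
        Real.exp (-(p - 1 / 2 + Real.sqrt (4 * p - 3) / 2)) *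
          (p - 1 / 2 + Real.sqrt (4 * p - 3) / 2) ^ (p - 1 / 2) / Real.Gamma p)
      (Set.Ici 1) := by
  have hrw : ∀ p ∈ Set.Ici (1:ℝ), Real.exp (-(p - 1 / 2 + Real.sqrt (4 * p - 3) / 2)) *
      (p - 1 / 2 + Real.sqrt (4 * p - 3) / 2) ^ (p - 1 / 2) / Real.Gamma p
      = Real.exp ((Afun p - Gfun p) + (Gfun p - (Real.log ∘ Real.Gamma) p)) := by
    intro p hp
    simp only [Set.mem_Ici] at hp
    have hm : 0 < mfun p := mfun_pos hp
    have hG : 0 < Real.Gamma p := Real.Gamma_pos_of_pos (by linarith)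
    have hmeq : p - 1 / 2 + Real.sqrt (4 * p - 3) / 2 = mfun p := rfl
    rw [hmeq, Real.rpow_def_of_pos hm, ← Real.exp_add,
      show Real.Gamma p = Real.exp (Real.log (Real.Gamma p)) from (Real.exp_log hG).symm,
      ← Real.exp_sub]
    congr 1
    unfold Afun Gfun
    simp only [Function.comp_apply]
    ring
  intro p hp q hq hpq
  dsimp only
  rw [hrw p hp, hrw q hq]
  have h1 := step1 hp hq hpq
  have h2 := step2 hp hq hpq
  dsimp only at h1 h2
  exact Real.exp_le_exp.mpr (by linarith)
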